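/- Let G be a finite commutative group, let g₁, …, g_d ∈ G generate G, and let u₁, …, u_k ∈ G be arbitrary. Let T ≥ 1 be a real number and suppose the relation lattice L(g₁,…,g_d) ⊆ ℤ^d has a ℤ-basis b₁, …, b_d with ‖bᵢ‖ ≤ T for all i. Then the relation lattice L(g₁,…,g_d,u₁,…,u_k) ⊆ ℤ^{d+k} has a ℤ-basis consisting of d + k vectors, each of Euclidean norm at most √(d+1) · T. -/

import Mathlib

/-- The relation lattice `L(g₁,…,gₜ) = {(z₁,…,zₜ) ∈ ℤᵗ : ∏ᵢ gᵢ^{zᵢ} = 1}`,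
as an additive subgroup of `ℤᵗ`. -/
def relLattice {G : Type*} [CommGroup G] {t : ℕ} (g : Fin t → G) :
    AddSubgroup (Fin t → ℤ) where
  carrier := {z | ∏ i, g i ^ z i = 1}
  zero_mem' := by simp
  add_mem' := by
    intro a b ha hb
    simp only [Set.mem_setOf_eq, Pi.add_apply] at *
    simp [zpow_add, Finset.prod_mul_distrib, ha, hb]
  neg_mem' := by
    intro a ha
    simp only [Set.mem_setOf_eq, Pi.neg_apply] at *
    simp [zpow_neg, Finset.prod_inv_distrib, ha]


/-- The Euclidean norm of an integer vector. -/
noncomputable def intNorm {d : ℕ} (z : Fin d → ℤ) : ℝ :=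
  Real.sqrt (∑ i, ((z i : ℝ)) ^ 2)

/- ------------------ auxiliary material ------------------- -/

lemma babai {E : Type*} [NormedAddCommGroup E] [InnerProductSpace ℝ E]
    [FiniteDimensional ℝ E] :
    ∀ (m : ℕ) (b : Fin m → E) (T : ℝ), (∀ i, ‖b i‖ ≤ T) →
    ∀ a ∈ Submodule.span ℝ (Set.range b), ∃ z : Fin m → ℤ,
      ‖a - ∑ i, (z i : ℝ) • b i‖ ^ 2 ≤ m * T ^ 2 / 4 := by
  intro m
  induction m with
  | zero =>
    intro b T hb a ha
    refine ⟨0, ?_⟩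
    have : Set.range b = ∅ := by
      simp [Set.range_eq_empty]
    rw [this, Submodule.span_empty, Submodule.mem_bot] at ha
    simp [ha]
  | succ m ih =>
    intro b T hb a ha
    obtain ⟨c, hc⟩ := (Submodule.mem_span_range_iff_exists_fun ℝ).mp ha
    set V := Submodule.span ℝ (Set.range (b ∘ Fin.castSucc)) with hV
    set p : E := (V.orthogonalProjectionOnto (b (Fin.last m)) : E) with hp
    have hpV : p ∈ V := (V.orthogonalProjectionOnto (b (Fin.last m))).2
    set b' : E := b (Fin.last m) - p with hb'
    have hb'mem : b' ∈ Vᗮ := Submodule.sub_starProjection_mem_orthogonal _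
    have hb'norm : ‖b'‖ ≤ ‖b (Fin.last m)‖ := by
      have h0 : (inner ℝ p b' : ℝ) = 0 :=
        Submodule.inner_right_of_mem_orthogonal hpV hb'mem
      have : ‖b (Fin.last m)‖ ^ 2 = ‖p‖ ^ 2 + ‖b'‖ ^ 2 := by
        have : b (Fin.last m) = p + b' := by simp [hb']
        rw [this, norm_add_sq_real, h0]; ring
      nlinarith [norm_nonneg p, norm_nonneg b', norm_nonneg (b (Fin.last m))]
    have hT0 : 0 ≤ T := le_trans (norm_nonneg _) (hb (Fin.last m))
    set θ : ℝ := c (Fin.last m) - round (c (Fin.last m)) with hθ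
    have hθle : |θ| ≤ 1 / 2 := abs_sub_round _
    set w : E := ∑ i : Fin m, c i.castSucc • b i.castSucc with hw
    have hwV : w ∈ V := by
      apply Submodule.sum_mem
      intro i _
      exact Submodule.smul_mem _ _ (Submodule.subset_span ⟨i, rfl⟩)
    have htV : w + θ • p ∈ V := V.add_mem hwV (V.smul_mem _ hpV)
    obtain ⟨z', hz'⟩ := ih (b ∘ Fin.castSucc) T (fun i => hb _) (w + θ • p) htV
    refine ⟨Fin.snoc z' (round (c (Fin.last m))), ?_⟩
    have hsum : ∑ i : Fin (m + 1), ((Fin.snoc z' (round (c (Fin.last m))) : Fin (m+1) → ℤ) i : ℝ) • b i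
        = (∑ i : Fin m, (z' i : ℝ) • b i.castSucc) + (round (c (Fin.last m)) : ℝ) • b (Fin.last m) := by
      rw [Fin.sum_univ_castSucc]
      simp
    have key : a - ∑ i : Fin (m + 1), ((Fin.snoc z' (round (c (Fin.last m))) : Fin (m+1) → ℤ) i : ℝ) • b i
        = ((w + θ • p) - ∑ i : Fin m, (z' i : ℝ) • (b ∘ Fin.castSucc) i) + θ • b' := by
      rw [hsum, ← hc, Fin.sum_univ_castSucc, ← hw]
      have : b (Fin.last m) = p + b' := by simp [hb']
      rw [this]
      simp only [smul_add, hθ, sub_smul, Function.comp]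
      abel
    rw [key]
    have hq : ((w + θ • p) - ∑ i : Fin m, (z' i : ℝ) • (b ∘ Fin.castSucc) i) ∈ V := by
      apply V.sub_mem htV
      apply Submodule.sum_mem
      intro i _
      exact Submodule.smul_mem _ _ (Submodule.subset_span ⟨i, rfl⟩)
    have h0 : (inner ℝ ((w + θ • p) - ∑ i : Fin m, (z' i : ℝ) • (b ∘ Fin.castSucc) i) (θ • b') : ℝ) = 0 :=
      Submodule.inner_right_of_mem_orthogonal hq (Vᗮ.smul_mem _ hb'mem)
    rw [norm_add_sq_real, h0]
    have hr : ‖θ • b'‖ ^ 2 ≤ T ^ 2 / 4 := by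
      rw [norm_smul]
      have h1 : ‖b'‖ ≤ T := le_trans hb'norm (hb _)
      have h2 : ‖θ‖ ≤ 1 / 2 := hθle
      have h3 : 0 ≤ ‖θ‖ := norm_nonneg _
      have h4 : ‖θ‖ * ‖b'‖ ≤ (1/2) * T :=
        mul_le_mul h2 h1 (norm_nonneg _) (by norm_num)
      nlinarith [mul_nonneg h3 (norm_nonneg b')]
    push_cast
    nlinarith [hz']

/-- The product-of-powers map, as an additive monoid hom into `Additive G`. -/
def phiHom {G : Type*} [CommGroup G] {t : ℕ} (g : Fin t → G) :
    (Fin t → ℤ) →+ Additive G where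
  toFun z := Additive.ofMul (∏ i, g i ^ z i)
  map_zero' := by simp
  map_add' x y := by
    simp only [Pi.add_apply, zpow_add, Finset.prod_mul_distrib, ofMul_mul]

lemma phiHom_apply {G : Type*} [CommGroup G] {t : ℕ} (g : Fin t → G) (z : Fin t → ℤ) :
    Additive.toMul (phiHom g z) = ∏ i, g i ^ z i := rfl

lemma mem_relLattice {G : Type*} [CommGroup G] {t : ℕ} (g : Fin t → G) (z : Fin t → ℤ) :
    z ∈ relLattice g ↔ ∏ i, g i ^ z i = 1 := Iff.rfl

lemma prod_zpow_single {G : Type*} [CommGroup G] {t : ℕ} (f : Fin t → G) (j : Fin t) (c : ℤ) :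
    ∏ i, f i ^ (Pi.single j c : Fin t → ℤ) i = f j ^ c := by
  have h : ∀ i, f i ^ (Pi.single j c : Fin t → ℤ) i = if i = j then f i ^ c else 1 := by
    intro i
    rcases eq_or_ne i j with rfl | h
    · simp
    · simp [Pi.single_eq_of_ne h, h]
  rw [Finset.prod_congr rfl (fun i _ => h i), Finset.prod_ite_eq']
  simp

lemma prod_zpow_add_sum {G : Type*} [CommGroup G] {t m : ℕ} (g : Fin t → G)
    (x : Fin t → ℤ) (y : Fin m → ℤ) (A : Fin m → Fin t → ℤ) :
    ∏ i, g i ^ (x + ∑ j, y j • A j) i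
      = (∏ i, g i ^ x i) * ∏ j, (∏ i, g i ^ (A j) i) ^ (y j) := by
  have h : phiHom g (x + ∑ j, y j • A j)
      = phiHom g x + ∑ j, y j • phiHom g (A j) := by
    rw [map_add, map_sum]
    congr 1
    exact Finset.sum_congr rfl fun j _ => map_zsmul (phiHom g) (y j) (A j)
  calc ∏ i, g i ^ (x + ∑ j, y j • A j) i
      = Additive.toMul (phiHom g (x + ∑ j, y j • A j)) := rfl
    _ = Additive.toMul (phiHom g x + ∑ j, y j • phiHom g (A j)) := by rw [h]
    _ = (∏ i, g i ^ x i) * ∏ j, (∏ i, g i ^ (A j) i) ^ (y j) := by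
        rw [toMul_add, toMul_sum]
        simp [toMul_zsmul, phiHom_apply]

lemma exists_rep {G : Type*} [CommGroup G] {d : ℕ} (g : Fin d → G)
    (hgen : Subgroup.closure (Set.range g) = ⊤) (x : G) :
    ∃ z : Fin d → ℤ, ∏ i, g i ^ z i = x := by
  let H : Subgroup G :=
  { carrier := Set.range (fun z : Fin d → ℤ => ∏ i, g i ^ z i)
    one_mem' := ⟨0, by simp⟩
    mul_mem' := by
      rintro _ _ ⟨a, rfl⟩ ⟨c, rfl⟩
      exact ⟨a + c, by simp [zpow_add, Finset.prod_mul_distrib]⟩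
    inv_mem' := by
      rintro _ ⟨a, rfl⟩
      exact ⟨-a, by simp [zpow_neg, Finset.prod_inv_distrib]⟩ }
  have hle : Subgroup.closure (Set.range g) ≤ H := by
    rw [Subgroup.closure_le]
    rintro _ ⟨i, rfl⟩
    refine ⟨Pi.single i 1, ?_⟩
    show ∏ i', g i' ^ (Pi.single i (1 : ℤ) : Fin d → ℤ) i' = g i
    rw [prod_zpow_single, zpow_one]
  have : x ∈ H := hle (by rw [hgen]; trivial)
  exact this

/-- The real vector associated to an integer vector, as an additive hom into
Euclidean space. -/
noncomputable def rvecHom (d : ℕ) : (Fin d → ℤ) →+ EuclideanSpace ℝ (Fin d) where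
  toFun z := (WithLp.equiv (2 : ENNReal) (Fin d → ℝ)).symm (fun i => (z i : ℝ))
  map_zero' := by
    have h : (fun _ : Fin d => (0 : ℝ)) = (0 : Fin d → ℝ) := rfl
    simp only [Pi.zero_apply, Int.cast_zero, h, WithLp.equiv_symm_apply, WithLp.toLp_zero]
  map_add' x y := by
    rw [WithLp.equiv_symm_apply, ← WithLp.toLp_add]
    congr 1
    funext i
    push_cast
    simp

lemma rvecHom_apply (d : ℕ) (z : Fin d → ℤ) (i : Fin d) : rvecHom d z i = (z i : ℝ) := rfl

lemma intNorm_eq_norm {d : ℕ} (z : Fin d → ℤ) : intNorm z = ‖rvecHom d z‖ := by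
  rw [EuclideanSpace.norm_eq, intNorm]
  congr 1
  refine Finset.sum_congr rfl (fun i _ => ?_)
  rw [rvecHom_apply, Real.norm_eq_abs, sq_abs]

lemma rvecHom_zsmul_cast (d : ℕ) (c : ℤ) (z : Fin d → ℤ) :
    rvecHom d (c • z) = (c : ℝ) • rvecHom d z := by
  rw [map_zsmul, Int.cast_smul_eq_zsmul]

lemma mem_relLattice_append {G : Type*} [CommGroup G] {d k : ℕ} (g : Fin d → G)
    (u : Fin k → G) (v : Fin (d + k) → ℤ) :
    v ∈ relLattice (Fin.append g u) ↔
      (∏ i, g i ^ v (Fin.castAdd k i)) * ∏ j, u j ^ v (Fin.natAdd d j) = 1 := by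
  rw [mem_relLattice, Fin.prod_univ_add]
  simp [Fin.append_left, Fin.append_right]

/-- If `g₁,…,g_d` generate the finite commutative group `G`, `u₁,…,u_k ∈ G` are
arbitrary, `T ≥ 1`, and the relation lattice `L(g₁,…,g_d)` has a ℤ-basis of vectors of
norm at most `T`, then the relation lattice `L(g₁,…,g_d,u₁,…,u_k) ⊆ ℤ^{d+k}` has a
ℤ-basis of `d+k` vectors, each of Euclidean norm at most `√(d+1) · T`. -/
theorem statement7 {G : Type*} [CommGroup G] [Finite G] (d k : ℕ) (hd : 0 < d)
    (g : Fin d → G) (u : Fin k → G) (hgen : Subgroup.closure (Set.range g) = ⊤)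
    (T : ℝ) (hT : 1 ≤ T) (b : Fin d → (Fin d → ℤ))
    (hbmem : ∀ i, b i ∈ relLattice g)
    (hbasis : ∀ z ∈ relLattice g, ∃! c : Fin d → ℤ, z = ∑ i, c i • b i)
    (hbnorm : ∀ i, intNorm (b i) ≤ T) :
    ∃ B : Fin (d + k) → (Fin (d + k) → ℤ),
      (∀ i, B i ∈ relLattice (Fin.append g u)) ∧
      (∀ z ∈ relLattice (Fin.append g u), ∃! c : Fin (d + k) → ℤ, z = ∑ i, c i • B i) ∧
      ∀ i, intNorm (B i) ≤ Real.sqrt (d + 1) * T := by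
  classical
  have hT0 : 0 ≤ T := le_trans zero_le_one hT
  -- a finite exponent
  obtain ⟨n, hn, hpow⟩ : ∃ n : ℕ, 0 < n ∧ ∀ x : G, x ^ n = 1 := by
    refine ⟨Nat.card G, Nat.card_pos, fun x => ?_⟩
    exact pow_card_eq_one'
  -- representatives of the uⱼ
  choose a ha using fun j => exists_rep g hgen (u j)
  -- real span membership
  have hbR : ∀ i, ‖rvecHom d (b i)‖ ≤ T := fun i => by
    rw [← intNorm_eq_norm]; exact hbnorm i
  have hspan : ∀ j, rvecHom d (a j) ∈
      Submodule.span ℝ (Set.range fun i => rvecHom d (b i)) := by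
    intro j
    have hmem : (n : ℤ) • a j ∈ relLattice g := by
      rw [mem_relLattice]
      have : ∏ i, g i ^ ((n : ℤ) • a j) i
          = Additive.toMul ((n : ℤ) • phiHom g (a j)) := by
        rw [← map_zsmul]; rfl
      rw [this, toMul_zsmul, phiHom_apply, ha j, zpow_natCast]
      exact hpow (u j)
    obtain ⟨c, hc, -⟩ := hbasis _ hmem
    have h1 : (n : ℝ) • rvecHom d (a j) = ∑ i, (c i : ℝ) • rvecHom d (b i) := by
      have h2 : ((n : ℤ) : ℝ) • rvecHom d (a j) = rvecHom d ((n : ℤ) • a j) :=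
        (rvecHom_zsmul_cast d _ _).symm
      push_cast at h2
      rw [h2, hc, map_sum]
      exact Finset.sum_congr rfl fun i _ => rvecHom_zsmul_cast d _ _
    have hne : (n : ℝ) ≠ 0 := by positivity
    have : rvecHom d (a j) = (n : ℝ)⁻¹ • ((n : ℝ) • rvecHom d (a j)) :=
      (inv_smul_smul₀ hne _).symm
    rw [this, h1]
    exact Submodule.smul_mem _ _ (Submodule.sum_mem _ fun i _ =>
      Submodule.smul_mem _ _ (Submodule.subset_span ⟨i, rfl⟩))
  -- Babai reduction
  have hbab : ∀ j, ∃ z : Fin d → ℤ,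
      ‖rvecHom d (a j) - ∑ i, (z i : ℝ) • rvecHom d (b i)‖ ^ 2 ≤ d * T ^ 2 / 4 :=
    fun j => babai d (fun i => rvecHom d (b i)) T hbR _ (hspan j)
  choose z hz using hbab
  set A : Fin k → Fin d → ℤ := fun j => a j - ∑ i, z j i • b i with hA
  have hArel : ∀ j, ∏ i, g i ^ (A j) i = u j := by
    intro j
    have h1 : A j = a j + ∑ i, (-(z j i)) • b i := by
      rw [hA]
      simp [sub_eq_add_neg, neg_smul, ← Finset.sum_neg_distrib]
    rw [h1, prod_zpow_add_sum]
    have h2 : ∀ i, (∏ i', g i' ^ (b i) i') ^ (-(z j i)) = 1 := by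
      intro i
      rw [(mem_relLattice g (b i)).mp (hbmem i), one_zpow]
    rw [Finset.prod_congr rfl fun i _ => h2 i]
    simp [ha j]
  have hAnorm : ∀ j, ∑ i, ((A j i : ℝ)) ^ 2 ≤ d * T ^ 2 / 4 := by
    intro j
    have h1 : rvecHom d (A j)
        = rvecHom d (a j) - ∑ i, (z j i : ℝ) • rvecHom d (b i) := by
      rw [hA]
      simp only [map_sub, map_sum]
      congr 1
      exact Finset.sum_congr rfl fun i _ => rvecHom_zsmul_cast d _ _
    have h2 : intNorm (A j) ^ 2 ≤ d * T ^ 2 / 4 := by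
      rw [intNorm_eq_norm, h1]; exact hz j
    have h3 : intNorm (A j) ^ 2 = ∑ i, ((A j i : ℝ)) ^ 2 := by
      rw [intNorm, Real.sq_sqrt]
      positivity
    linarith [h2, h3.symm.le, h3.le]
  -- the new basis
  set B : Fin (d + k) → Fin (d + k) → ℤ :=
    Fin.append (fun i => Fin.append (b i) 0) (fun j => Fin.append (-(A j)) (Pi.single j 1))
    with hB
  refine ⟨B, ?_, ?_, ?_⟩
  · -- membership
    intro t
    refine Fin.addCases (fun i => ?_) (fun j => ?_) t
    · rw [hB, Fin.append_left, mem_relLattice_append]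
      simp only [Fin.append_left, Fin.append_right, Pi.zero_apply]
      rw [(mem_relLattice g (b i)).mp (hbmem i)]
      simp
    · rw [hB, Fin.append_right, mem_relLattice_append]
      simp only [Fin.append_left, Fin.append_right, Pi.neg_apply]
      have h1 : ∏ i, g i ^ (-(A j i)) = (u j)⁻¹ := by
        rw [← (hArel j)]
        simp [zpow_neg, Finset.prod_inv_distrib]
      rw [h1, prod_zpow_single]
      simp
  · -- basis property
    intro v hv
    set x : Fin d → ℤ := fun i => v (Fin.castAdd k i) with hx
    set y : Fin k → ℤ := fun j => v (Fin.natAdd d j) with hy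
    rw [mem_relLattice_append] at hv
    -- component computations
    have gpart : ∀ (c : Fin (d + k) → ℤ) (s : Fin d),
        (∑ t, c t • B t) (Fin.castAdd k s)
          = (∑ i, c (Fin.castAdd k i) * b i s) - ∑ j, c (Fin.natAdd d j) * A j s := by
      intro c s
      rw [Finset.sum_apply, Fin.sum_univ_add]
      simp only [Pi.smul_apply, smul_eq_mul, hB, Fin.append_left, Fin.append_right,
        Pi.neg_apply, mul_neg]
      rw [Finset.sum_neg_distrib, ← sub_eq_add_neg]
    have upart : ∀ (c : Fin (d + k) → ℤ) (s : Fin k),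
        (∑ t, c t • B t) (Fin.natAdd d s) = c (Fin.natAdd d s) := by
      intro c s
      rw [Finset.sum_apply, Fin.sum_univ_add]
      simp only [Pi.smul_apply, smul_eq_mul, hB, Fin.append_left, Fin.append_right,
        Pi.zero_apply, mul_zero, Finset.sum_const_zero, zero_add]
      simp [Pi.single_apply, mul_ite, Finset.sum_ite_eq]
    -- x' is a relation among the g's
    set x' : Fin d → ℤ := x + ∑ j, y j • A j with hx'
    have hx'mem : x' ∈ relLattice g := by
      rw [mem_relLattice, hx', prod_zpow_add_sum]
      have h4 : ∏ j, (∏ i, g i ^ (A j) i) ^ y j = ∏ j, u j ^ y j :=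
        Finset.prod_congr rfl fun j _ => by rw [hArel j]
      rw [h4]
      simpa only [hx, hy] using hv
    obtain ⟨c₀, hc₀, hc₀u⟩ := hbasis x' hx'mem
    refine ⟨Fin.append c₀ y, ?_, ?_⟩
    · -- v = ∑ (append c₀ y) t • B t
      funext s
      refine Fin.addCases (fun s => ?_) (fun s => ?_) s
      · rw [gpart]
        simp only [Fin.append_left, Fin.append_right]
        have h1 : ∑ i, c₀ i * b i s = x' s := by
          rw [hc₀, Finset.sum_apply]
          simp
        have h2 : x' s = x s + ∑ j, y j * A j s := by
          rw [hx']
          simp [Finset.sum_apply]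
        rw [h1, h2]
        simp [hx]
      · rw [upart]
        simp [Fin.append_right, hy]
    · -- uniqueness
      intro c hc
      have hcy : ∀ j, c (Fin.natAdd d j) = y j := by
        intro j
        rw [hy]
        simp only []
        rw [hc, upart]
      have hcg : (fun i => c (Fin.castAdd k i)) = c₀ := by
        apply hc₀u
        funext s
        have h1 : x s = (∑ i, c (Fin.castAdd k i) * b i s) - ∑ j, c (Fin.natAdd d j) * A j s := by
          rw [hx]
          simp only []
          rw [hc, gpart]
        have h2 : x' s = x s + ∑ j, y j * A j s := by
          rw [hx']
          simp [Finset.sum_apply]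
        rw [h2, h1, Finset.sum_apply]
        have h3 : ∀ j, c (Fin.natAdd d j) * A j s = y j * A j s := fun j => by rw [hcy j]
        rw [Finset.sum_congr rfl fun j _ => h3 j]
        simp [sub_add_cancel]
      funext t
      refine Fin.addCases (fun i => ?_) (fun j => ?_) t
      · rw [Fin.append_left, ← hcg]
      · rw [Fin.append_right, hcy j]
  · -- norms
    intro t
    have hs1 : (1 : ℝ) ≤ Real.sqrt (d + 1) := by
      rw [Real.one_le_sqrt]
      push_cast
      linarith [Nat.cast_nonneg (α := ℝ) d]
    have happ : ∀ {x : Fin d → ℤ} {w : Fin k → ℤ},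
        intNorm (Fin.append x w)
          = Real.sqrt ((∑ i, ((x i : ℝ)) ^ 2) + ∑ j, ((w j : ℝ)) ^ 2) := by
      intro x w
      rw [intNorm, Fin.sum_univ_add]
      congr 1
      simp [Fin.append_left, Fin.append_right]
    refine Fin.addCases (fun i => ?_) (fun j => ?_) t
    · rw [hB, Fin.append_left, happ]
      have : Real.sqrt ((∑ i', ((b i i' : ℝ)) ^ 2) + ∑ j, (((0 : Fin k → ℤ) j : ℝ)) ^ 2)
          = intNorm (b i) := by
        rw [intNorm]
        congr 1
        simp
      rw [this]
      calc intNorm (b i) ≤ T := hbnorm i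
        _ ≤ Real.sqrt (d + 1) * T := le_mul_of_one_le_left hT0 hs1
    · rw [hB, Fin.append_right, happ]
      have h1 : ∑ j', (((Pi.single j 1 : Fin k → ℤ) j' : ℝ)) ^ 2 = 1 := by
        have : ∀ j', (((Pi.single j 1 : Fin k → ℤ) j' : ℝ)) ^ 2
            = if j' = j then 1 else 0 := by
          intro j'
          rcases eq_or_ne j' j with rfl | h
          · simp
          · simp [Pi.single_eq_of_ne h, h]
        rw [Finset.sum_congr rfl fun j' _ => this j', Finset.sum_ite_eq']
        simp
      have h2 : ∑ i, (((-(A j)) i : ℝ)) ^ 2 = ∑ i, ((A j i : ℝ)) ^ 2 := by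
        apply Finset.sum_congr rfl
        intro i _
        simp only [Pi.neg_apply]
        push_cast
        ring
      rw [h1, h2]
      have h3 : (∑ i, ((A j i : ℝ)) ^ 2) + 1 ≤ (d + 1) * T ^ 2 := by
        have := hAnorm j
        have hd0 : (0 : ℝ) ≤ d := Nat.cast_nonneg d
        nlinarith
      calc Real.sqrt ((∑ i, ((A j i : ℝ)) ^ 2) + 1)
          ≤ Real.sqrt ((d + 1) * T ^ 2) := Real.sqrt_le_sqrt h3
        _ = Real.sqrt (d + 1) * T := by
            rw [Real.sqrt_mul (by positivity), Real.sqrt_sq hT0]
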